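/- Under Assumption 1, if 0 < x_k* < ∞ (the reservation value of box k given uncovered prizes x, and the map y ↦ ∫[u(x,y,t) - u(x,y)] dF_k(t) is continuous and equals c_k at y = x_k*), then opening box k is weakly better than stopping: c_k ≤ ∫ [u(x, t) - u(x)] dF_k(t). -/

import Mathlib

open scoped NNReal

/-- `u` is symmetric: invariant under permutations of its arguments. -/
def IsSymmU (u : List ℝ≥0 → ℝ) : Prop := ∀ l l' : List ℝ≥0, l.Perm l' → u l = u l'

/-- `u` is nondecreasing in each argument. -/
def IsMonoU (u : List ℝ≥0 → ℝ) : Prop :=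
  ∀ l l' : List ℝ≥0, List.Forall₂ (· ≤ ·) l l' → u l ≤ u l'

/-- `u` is submodular: `u(x∧y)+u(x∨y) ≤ u(x)+u(y)` for equal-length tuples. -/
def IsSubmodU (u : List ℝ≥0 → ℝ) : Prop := ∀ l l' : List ℝ≥0, l.length = l'.length →
  u (List.zipWith min l l') + u (List.zipWith max l l') ≤ u l + u l'

/-- `u` is continuous on tuples of each fixed length. -/
def IsContU (u : List ℝ≥0 → ℝ) : Prop :=
  ∀ n : ℕ, Continuous (fun v : Fin n → ℝ≥0 => u (List.ofFn v))

/-- Assumption 1: `u(∅)=0`, prepending a zero leaves `u` unchanged, `u` nonnegative,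
continuous, symmetric, nondecreasing and submodular. -/
def Assumption1 (u : List ℝ≥0 → ℝ) : Prop :=
  u [] = 0 ∧ (∀ l, u (0 :: l) = u l) ∧ (∀ l, 0 ≤ u l) ∧
    IsContU u ∧ IsSymmU u ∧ IsMonoU u ∧ IsSubmodU u

/-- Assumption 2: the benefit of raising an argument from `0` to `xi` does not
depend on the values of other arguments exceeding `xi`. -/
def Assumption2 (u : List ℝ≥0 → ℝ) : Prop :=
  ∀ (l : List ℝ≥0) (xi xlo xhi : ℝ≥0), xi ≤ xlo → xlo < xhi →
    u (l ++ [xhi, xi]) - u (l ++ [xhi, 0]) = u (l ++ [xlo, xi]) - u (l ++ [xlo, 0])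

open MeasureTheory

/-- If `0 < x_k* < ∞` and at the reservation value the indifference equality
`c_k = ∫ (u(x,x_k*,t) - u(x,x_k*)) dF_k(t)` holds (by continuity), then opening
box `k` is weakly better than stopping: `c_k ≤ ∫ (u(x,t) - u(x)) dF_k(t)`. -/
theorem stmt_17 (u : List ℝ≥0 → ℝ) (hA1 : Assumption1 u)
    (F : Measure ℝ≥0) [IsProbabilityMeasure F]
    (hInt : ∀ l : List ℝ≥0, Integrable (fun t => u (l ++ [t])) F)
    (c : ℝ) (hc : 0 ≤ c) (x : List ℝ≥0) (y : ℝ≥0) (hy : 0 < y)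
    (heq : c = ∫ t, (u (x ++ [y, t]) - u (x ++ [y])) ∂F) :
    c ≤ ∫ t, (u (x ++ [t]) - u x) ∂F := by
  obtain ⟨h0, hzero, hnn, hcont, hsymm, hmono, hsub⟩ := hA1
  have hdrop : ∀ l : List ℝ≥0, u (l ++ [0]) = u l := by
    intro l
    have := hsymm (l ++ [0]) (0 :: l) (List.perm_append_comm)
    rw [this, hzero]
  have key : ∀ t : ℝ≥0, u (x ++ [y, t]) - u (x ++ [y]) ≤ u (x ++ [t]) - u x := by
    intro t
    have hs := hsub (x ++ [y, 0]) (x ++ [0, t]) (by simp)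
    have hmin : List.zipWith min (x ++ [y, 0]) (x ++ [0, t]) = x ++ [0, 0] := by
      rw [List.zipWith_append rfl, List.zipWith_self]
      simp
    have hmax : List.zipWith max (x ++ [y, 0]) (x ++ [0, t]) = x ++ [y, t] := by
      rw [List.zipWith_append rfl, List.zipWith_self]
      simp
    rw [hmin, hmax] at hs
    have e1 : u (x ++ [0, 0]) = u x := by
      have : x ++ [0, 0] = (x ++ [(0:ℝ≥0)]) ++ [0] := by simp
      rw [this, hdrop, hdrop]
    have e2 : u (x ++ [y, 0]) = u (x ++ [y]) := by
      have : x ++ [y, 0] = (x ++ [y]) ++ [0] := by simp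
      rw [this, hdrop]
    have e3 : u (x ++ [0, t]) = u (x ++ [t]) := by
      have h1 : (x ++ [(0:ℝ≥0), t]).Perm (x ++ [t, 0]) := by
        apply List.Perm.append_left
        exact List.Perm.swap _ _ _
      rw [hsymm _ _ h1]
      have : x ++ [t, 0] = (x ++ [t]) ++ [0] := by simp
      rw [this, hdrop]
    rw [e1, e2, e3] at hs
    linarith
  have hi1 : Integrable (fun t => u (x ++ [y, t]) - u (x ++ [y])) F := by
    have := (hInt (x ++ [y])).sub (integrable_const (u (x ++ [y])))
    convert this using 1
    ext t
    simp
  have hi2 : Integrable (fun t => u (x ++ [t]) - u x) F := by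
    have := (hInt x).sub (integrable_const (u x))
    exact this
  rw [heq]
  exact integral_mono hi1 hi2 key
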